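/- arXiv:0808.1133 — 2 statements merged into one kernel-verified Lean document; each statement's English description precedes it below -/
import Mathlib

section
/- If h : ℝ → ℝ is concave on the interval (0, x₀), then the function x ↦ x·h(x) − 2·∫₀ˣ h(s) ds is concave on (0, x₀). -/
open Set MeasureTheory

private lemma line_integral (p q α β γ : ℝ) :
    ∫ x in p..q, (α + β * (x - γ)) =
      (α * q + β * (q - γ)^2 / 2) - (α * p + β * (p - γ)^2 / 2) := by
  apply intervalIntegral.integral_eq_sub_of_hasDerivAt
  · intro x _
    have h1 : HasDerivAt (fun x : ℝ => α * x + β * ((x - γ)^2) / 2)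
        (α * 1 + β * (↑2 * (x - γ)^(2-1) * 1) / 2) x := by
      exact (((hasDerivAt_id x).const_mul α).add
        (((((hasDerivAt_id x).sub_const γ).pow 2).const_mul β).div_const 2))
    convert h1 using 1
    · rfl
    · rfl
    ring
  · exact (Continuous.intervalIntegrable (by continuity) p q)

private lemma aux_key (h : ℝ → ℝ) (x₀ : ℝ)
    (hconc : ConcaveOn ℝ (Set.Ioo 0 x₀) h)
    (hint : ∀ x ∈ Set.Ioo (0:ℝ) x₀, IntervalIntegrable h MeasureTheory.volume 0 x)
    {a b t s : ℝ} (ha : a ∈ Set.Ioo 0 x₀) (hb : b ∈ Set.Ioo 0 x₀)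
    (hab : a ≤ b) (ht : 0 ≤ t) (hs : 0 ≤ s) (hts : t + s = 1) :
    t * (a * h a - 2 * ∫ u in (0:ℝ)..a, h u) + s * (b * h b - 2 * ∫ u in (0:ℝ)..b, h u)
      ≤ (t*a + s*b) * h (t*a + s*b) - 2 * ∫ u in (0:ℝ)..(t*a + s*b), h u := by
  rcases eq_or_lt_of_le ht with ht0 | ht0
  · have hs1 : s = 1 := by linarith
    have hc : t*a + s*b = b := by rw [← ht0, hs1]; ring
    rw [hc, ← ht0, hs1]; ring_nf; exact le_refl _
  rcases eq_or_lt_of_le hs with hs0 | hs0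
  · have ht1 : t = 1 := by linarith
    have hc : t*a + s*b = a := by rw [← hs0, ht1]; ring
    rw [hc, ← hs0, ht1]; ring_nf; exact le_refl _
  rcases eq_or_lt_of_le hab with hab0 | hab0
  · subst hab0
    have hc : t*a + s*a = a := by linear_combination a * hts
    rw [hc]
    have hsum : t * (a * h a - 2 * ∫ u in (0:ℝ)..a, h u)
        + s * (a * h a - 2 * ∫ u in (0:ℝ)..a, h u)
        = a * h a - 2 * ∫ u in (0:ℝ)..a, h u := by
      linear_combination (a * h a - 2 * ∫ u in (0:ℝ)..a, h u) * hts
    rw [hsum]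
  -- main case: 0 < t, 0 < s, a < b
  have hs_eq : s = 1 - t := by linarith
  subst hs_eq
  have ht1 : t < 1 := by linarith
  set c : ℝ := t*a + (1-t)*b with hc_def
  have hac : a < c := by
    have h1 : c - a = (1-t)*(b-a) := by rw [hc_def]; ring
    nlinarith [mul_pos (by linarith : (0:ℝ) < 1 - t) (sub_pos.mpr hab0)]
  have hcb : c < b := by
    have h1 : b - c = t*(b-a) := by rw [hc_def]; ring
    nlinarith [mul_pos ht0 (sub_pos.mpr hab0)]
  have hcmem : c ∈ Set.Ioo 0 x₀ := ⟨lt_trans ha.1 hac, lt_trans hcb hb.2⟩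
  set m : ℝ := (h b - h c) / (b - c) with hm_def
  have hbc : (0:ℝ) < b - c := by linarith
  have hm : h b = h c + m * (b - c) := by
    rw [hm_def]; field_simp; ring
  -- K1 : on [a,c], h lies below the line through (c, h c) with slope m
  have K1 : ∀ u ∈ Set.Icc a c, h u ≤ h c + m * (u - c) := by
    intro u hu
    rcases eq_or_lt_of_le hu.2 with heq | hlt
    · rw [heq]; simp
    · have hu0 : u ∈ Set.Ioo 0 x₀ := ⟨lt_of_lt_of_le ha.1 hu.1, lt_trans (lt_trans hlt hcb) hb.2⟩
      have hsl := hconc.slope_anti_adjacent hu0 hb hlt hcb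
      rw [← hm_def] at hsl
      have h2 : m * (c - u) ≤ h c - h u := by
        rw [le_div_iff₀ (by linarith : (0:ℝ) < c - u)] at hsl
        linarith
      nlinarith
  -- K2 : on [c,b], h lies above the chord from (c, h c) to (b, h b)
  have K2 : ∀ u ∈ Set.Icc c b, h c + m * (u - c) ≤ h u := by
    intro u hu
    have hl0 : 0 ≤ (b - u) / (b - c) := div_nonneg (by linarith [hu.2]) hbc.le
    have hl1 : 0 ≤ (u - c) / (b - c) := div_nonneg (by linarith [hu.1]) hbc.le
    have hlsum : (b - u) / (b - c) + (u - c) / (b - c) = 1 := by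
      field_simp; ring
    have hcomb := hconc.2 hcmem hb hl0 hl1 hlsum
    simp only [smul_eq_mul] at hcomb
    have harg : (b - u) / (b - c) * c + (u - c) / (b - c) * b = u := by
      field_simp; ring
    rw [harg] at hcomb
    have hval : (b - u) / (b - c) * h c + (u - c) / (b - c) * h b
        = h c + m * (u - c) := by
      rw [hm_def]; field_simp; ring
    linarith [hval ▸ hcomb]
  -- integrability
  have hia : IntervalIntegrable h volume a c := (hint a ha).symm.trans (hint c hcmem)
  have hib : IntervalIntegrable h volume c b := (hint c hcmem).symm.trans (hint b hb)
  have hlinec : Continuous (fun u : ℝ => h c + m * (u - c)) :=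
    by fun_prop
  have hline1 : IntervalIntegrable (fun u => h c + m * (u - c)) volume a c :=
    hlinec.intervalIntegrable a c
  have hline2 : IntervalIntegrable (fun u => h c + m * (u - c)) volume c b :=
    hlinec.intervalIntegrable c b
  have I1 : (∫ u in a..c, h u) ≤ ∫ u in a..c, (h c + m * (u - c)) :=
    intervalIntegral.integral_mono_on hac.le hia hline1 K1
  have I2 : (∫ u in c..b, (h c + m * (u - c))) ≤ ∫ u in c..b, h u :=
    intervalIntegral.integral_mono_on hcb.le hline2 hib K2
  rw [line_integral] at I1 I2
  -- split integrals
  have S1 : (∫ u in (0:ℝ)..c, h u) = (∫ u in (0:ℝ)..a, h u) + ∫ u in a..c, h u :=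
    (intervalIntegral.integral_add_adjacent_intervals (hint a ha) hia).symm
  have S2 : (∫ u in (0:ℝ)..b, h u) = (∫ u in (0:ℝ)..c, h u) + ∫ u in c..b, h u :=
    (intervalIntegral.integral_add_adjacent_intervals (hint c hcmem) hib).symm
  have hKa : h a ≤ h c + m * (a - c) := K1 a ⟨le_refl a, hac.le⟩
  have e1 : t * (a * h a) ≤ t * (a * (h c + m * (a - c))) :=
    mul_le_mul_of_nonneg_left (mul_le_mul_of_nonneg_left hKa ha.1.le) ht
  have e2 : t * (∫ u in a..c, h u)
      ≤ t * ((h c * c + m * (c - c)^2 / 2) - (h c * a + m * (a - c)^2 / 2)) :=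
    mul_le_mul_of_nonneg_left I1 ht
  have e3 : (1-t) * ((h c * b + m * (b - c)^2 / 2) - (h c * c + m * (c - c)^2 / 2))
      ≤ (1-t) * (∫ u in c..b, h u) :=
    mul_le_mul_of_nonneg_left I2 (by linarith)
  have e4 : (1-t) * (b * h b) = (1-t) * (b * (h c + m * (b - c))) := by rw [← hm]
  rw [S2, S1]
  rw [hc_def] at e1 e2 e3 e4 ⊢
  linarith [e1, e2, e3, e4]

theorem stmt_1 (h : ℝ → ℝ) (x₀ : ℝ) (hx₀ : 0 < x₀)
    (hconc : ConcaveOn ℝ (Set.Ioo 0 x₀) h)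
    (hint : ∀ x ∈ Set.Ioo (0:ℝ) x₀, IntervalIntegrable h MeasureTheory.volume 0 x) :
    ConcaveOn ℝ (Set.Ioo 0 x₀)
      (fun x => x * h x - 2 * ∫ s in (0:ℝ)..x, h s) := by
  refine ⟨convex_Ioo 0 x₀, ?_⟩
  intro x hx y hy t s ht hs hts
  simp only [smul_eq_mul]
  rcases le_total x y with hxy | hxy
  · exact aux_key h x₀ hconc hint hx hy hxy ht hs hts
  · have key := aux_key h x₀ hconc hint hy hx hxy hs ht (by linarith)
    have harg : s*y + t*x = t*x + s*y := by ring
    rw [harg] at key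
    linarith
end

section
/- Let H be a self-adjoint operator on a finite-dimensional Hilbert space with orthonormal eigenbasis {φ_k}, eigenvalues {λ_k}, J a subset of indices, and G self-adjoint. If f ∈ C¹(ℝ) with f' concave, then ∑_{j∈J} ∑_{k∈J} f(λ_j)(λ_k − λ_j)|⟨Gφ_j,φ_k⟩|² ≤ −(1/2) ∑_{j∈J} ∑_{k∈J} f'(λ_j)(λ_k − λ_j)²|⟨Gφ_j,φ_k⟩|². -/
open scoped InnerProductSpace
open intervalIntegral

lemma aux8_hh (f : ℝ → ℝ) (hf : ContDiff ℝ 1 f)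
    (hconc : ConcaveOn ℝ Set.univ (deriv f)) (x y : ℝ) (hxy : x ≤ y) :
    (deriv f x + deriv f y) / 2 * (y - x) ≤ f y - f x := by
  rcases eq_or_lt_of_le hxy with h | h
  · subst h; simp
  have hg : Continuous (deriv f) := hf.continuous_deriv le_rfl
  have h1 : f y - f x = ∫ s in x..y, deriv f s :=
    (integral_deriv_eq_sub (fun s _ => hf.differentiable one_ne_zero s)
      (hg.intervalIntegrable x y)).symm
  set c : ℝ := (deriv f y - deriv f x) / (y - x) with hc
  have hcont : Continuous fun s : ℝ => deriv f x + (s - x) * c := by continuity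
  have h2 : (∫ s in x..y, (deriv f x + (s - x) * c))
      = (deriv f x + deriv f y) / 2 * (y - x) := by
    have hb : IntervalIntegrable (fun s : ℝ => (s - x) * c) MeasureTheory.volume x y :=
      Continuous.intervalIntegrable (by continuity) x y
    rw [integral_add (intervalIntegrable_const) hb]
    rw [integral_const]
    have hsub : IntervalIntegrable (fun s : ℝ => s - x) MeasureTheory.volume x y :=
      Continuous.intervalIntegrable (by continuity) x y
    have hne : y - x ≠ 0 := by linarith
    have h3 : (∫ s in x..y, (s - x) * c) = (y - x)^2/2 * c := by
      rw [integral_mul_const,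
        integral_sub intervalIntegrable_id
          intervalIntegrable_const,
        integral_id, integral_const, smul_eq_mul]
      ring
    rw [h3, hc, smul_eq_mul]
    field_simp
    ring
  rw [h1, ← h2]
  apply integral_mono_on h.le
    (hcont.intervalIntegrable x y) (hg.intervalIntegrable x y)
  intro s hs
  rw [Set.mem_Icc] at hs
  set t : ℝ := (s - x) / (y - x) with ht
  have hne : y - x ≠ 0 := by linarith
  have ht0 : 0 ≤ t := div_nonneg (by linarith) (by linarith)
  have ht1 : t ≤ 1 := by
    rw [ht, div_le_one (by linarith)]; linarith
  have hcomb := hconc.2 (Set.mem_univ x) (Set.mem_univ y) (by linarith : (0:ℝ) ≤ 1 - t)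
    ht0 (by ring)
  have hs' : (1 - t) • x + t • y = s := by
    simp only [smul_eq_mul, ht]; field_simp; ring
  rw [hs'] at hcomb
  have heq : deriv f x + (s - x) * c = (1 - t) • deriv f x + t • deriv f y := by
    simp only [smul_eq_mul, ht, hc]; field_simp; ring
  rw [heq]; exact hcomb

lemma aux8_key (f : ℝ → ℝ) (hf : ContDiff ℝ 1 f)
    (hconc : ConcaveOn ℝ Set.univ (deriv f)) (x y : ℝ) :
    (deriv f x + deriv f y) / 2 * (y - x) ^ 2 ≤ (f y - f x) * (y - x) := by
  rcases le_total x y with h | h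
  · have := mul_le_mul_of_nonneg_right (aux8_hh f hf hconc x y h) (by linarith : (0:ℝ) ≤ y - x)
    nlinarith [this]
  · have := mul_le_mul_of_nonneg_right (aux8_hh f hf hconc y x h) (by linarith : (0:ℝ) ≤ x - y)
    nlinarith [this]

lemma aux8_sum {ι : Type*} (J : Finset ι) (lam : ι → ℝ) (w : ι → ι → ℝ)
    (hwsymm : ∀ j k, w j k = w k j) (hw0 : ∀ j k, 0 ≤ w j k)
    (f f' : ℝ → ℝ)
    (key : ∀ x y, (f' x + f' y) / 2 * (y - x) ^ 2 ≤ (f y - f x) * (y - x)) :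
    ∑ j ∈ J, ∑ k ∈ J, f (lam j) * (lam k - lam j) * w j k
      ≤ -(1/2) * ∑ j ∈ J, ∑ k ∈ J, f' (lam j) * (lam k - lam j) ^ 2 * w j k := by
  set A := ∑ j ∈ J, ∑ k ∈ J, f (lam j) * (lam k - lam j) * w j k with hA
  set B := ∑ j ∈ J, ∑ k ∈ J, f' (lam j) * (lam k - lam j) ^ 2 * w j k with hB
  set S1 := ∑ j ∈ J, ∑ k ∈ J, (f (lam k) - f (lam j)) * (lam k - lam j) * w j k with hS1
  set S2 := ∑ j ∈ J, ∑ k ∈ J, (f' (lam j) + f' (lam k)) / 2 * (lam k - lam j) ^ 2 * w j k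
    with hS2
  have hAswap : A = ∑ j ∈ J, ∑ k ∈ J, f (lam k) * (lam j - lam k) * w j k := by
    rw [hA, Finset.sum_comm]
    exact Finset.sum_congr rfl fun j _ => Finset.sum_congr rfl fun k _ => by
      rw [hwsymm k j]
  have hBswap : B = ∑ j ∈ J, ∑ k ∈ J, f' (lam k) * (lam k - lam j) ^ 2 * w j k := by
    rw [hB, Finset.sum_comm]
    refine Finset.sum_congr rfl fun j _ => Finset.sum_congr rfl fun k _ => ?_
    rw [hwsymm k j]; ring_nf
  have h2A : A + A = -S1 := by
    nth_rewrite 2 [hAswap]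
    rw [hS1, ← Finset.sum_neg_distrib, ← Finset.sum_add_distrib]
    refine Finset.sum_congr rfl fun j _ => ?_
    rw [← Finset.sum_neg_distrib, ← Finset.sum_add_distrib]
    exact Finset.sum_congr rfl fun k _ => by ring
  have h2Ba : B + B = ∑ j ∈ J, ∑ k ∈ J,
      (f' (lam j) + f' (lam k)) * (lam k - lam j) ^ 2 * w j k := by
    nth_rewrite 2 [hBswap]
    rw [hB, ← Finset.sum_add_distrib]
    refine Finset.sum_congr rfl fun j _ => ?_
    rw [← Finset.sum_add_distrib]
    exact Finset.sum_congr rfl fun k _ => by ring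
  have h2Bb : S2 + S2 = ∑ j ∈ J, ∑ k ∈ J,
      (f' (lam j) + f' (lam k)) * (lam k - lam j) ^ 2 * w j k := by
    rw [hS2, ← Finset.sum_add_distrib]
    refine Finset.sum_congr rfl fun j _ => ?_
    rw [← Finset.sum_add_distrib]
    exact Finset.sum_congr rfl fun k _ => by ring
  have hle : S2 ≤ S1 := by
    refine Finset.sum_le_sum fun j _ => Finset.sum_le_sum fun k _ => ?_
    exact mul_le_mul_of_nonneg_right (key (lam j) (lam k)) (hw0 j k)
  linarith

theorem stmt_8 {E : Type*} [NormedAddCommGroup E] [InnerProductSpace ℂ E]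
    [FiniteDimensional ℂ E] (N : ℕ)
    (H G : E →L[ℂ] E) (hH : IsSelfAdjoint H) (hG : IsSelfAdjoint G)
    (φ : Fin N → E) (lam : Fin N → ℝ) (hON : Orthonormal ℂ φ)
    (heig : ∀ k, H (φ k) = (lam k : ℂ) • φ k)
    (J : Finset (Fin N)) (f : ℝ → ℝ) (hf : ContDiff ℝ 1 f)
    (hconc : ConcaveOn ℝ Set.univ (deriv f)) :
    ∑ j ∈ J, ∑ k ∈ J, f (lam j) * (lam k - lam j) * ‖⟪G (φ j), φ k⟫_ℂ‖ ^ 2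
      ≤ -(1/2) * ∑ j ∈ J, ∑ k ∈ J,
          deriv f (lam j) * (lam k - lam j) ^ 2 * ‖⟪G (φ j), φ k⟫_ℂ‖ ^ 2 := by
  have hwsymm : ∀ j k : Fin N, ‖⟪G (φ j), φ k⟫_ℂ‖ ^ 2 = ‖⟪G (φ k), φ j⟫_ℂ‖ ^ 2 := by
    intro j k
    have h1 : ⟪G (φ j), φ k⟫_ℂ = ⟪φ j, G (φ k)⟫_ℂ := by
      conv_lhs => rw [← hG.adjoint_eq]
      exact ContinuousLinearMap.adjoint_inner_left G (φ k) (φ j)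
    rw [h1, ← inner_conj_symm, RCLike.norm_conj]
  exact aux8_sum J lam (fun j k => ‖⟪G (φ j), φ k⟫_ℂ‖ ^ 2) hwsymm
    (fun j k => by positivity) f (deriv f) (aux8_key f hf hconc)
end
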